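/- Fix g ≥ 2 and signs ε₁, …, ε_{g−1} ∈ {1, −1}, exactly k of which equal −1. Define a point of (ℂ^×)^{3g−3} in the coordinates (u₁,…,u_{g−1}, v₁,…,v_{g−1}, z₁,…,z_{g−1}) by u_i = v_i = ε_i and z_i = 1 for all i. Then this point is a critical point of the genus-g necklace graph potential W_g, and W_g takes the value 8(g−1) − 16k there. -/

import Mathlib

open Finset

/-- `J⁺(x) = x + x⁻¹`. -/
noncomputable def Jp (x : ℂ) : ℂ := x + x⁻¹

/-- The genus-`g` necklace graph potential (one colored vertex) in the
coordinates `u i, v i, z i` for `i = 1, …, g-1`. -/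
noncomputable def necklace (g : ℕ) (u v z : ℕ → ℂ) : ℂ :=
  z 1 * (Jp (v (g-1)) + Jp (u 1)) + (z 1)⁻¹ * (Jp (u (g-1)) + Jp (v 1)) +
    ∑ i ∈ Finset.Icc 2 (g-1),
      (z i * (Jp (u (i-1)) + Jp (u i)) + (z i)⁻¹ * (Jp (v (i-1)) + Jp (v i)))

/-- A point of the torus is a critical point of the necklace graph potential
if all partial derivatives vanish there. -/
def IsCritNecklace (g : ℕ) (u v z : ℕ → ℂ) : Prop :=
  ∀ i ∈ Finset.Icc 1 (g-1),
    deriv (fun t => necklace g (Function.update u i t) v z) (u i) = 0 ∧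
    deriv (fun t => necklace g u (Function.update v i t) z) (v i) = 0 ∧
    deriv (fun t => necklace g u v (Function.update z i t)) (z i) = 0

lemma Jp_update (u : ℕ → ℂ) (i j : ℕ) (c : ℂ) (hc : c * c = 1) :
    HasDerivAt (fun t : ℂ => Jp (Function.update u i t j)) 0 c := by
  rcases eq_or_ne j i with rfl | h
  · have hc0 : c ≠ 0 := by rintro rfl; simp at hc
    have h1 : HasDerivAt (fun t : ℂ => t + t⁻¹) (1 + -(c ^ 2)⁻¹) c :=
      (hasDerivAt_id c).add (hasDerivAt_inv hc0)
    have h2 : (1 : ℂ) + -(c ^ 2)⁻¹ = 0 := by rw [sq, hc]; ring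
    rw [h2] at h1
    simpa [Jp] using h1
  · simpa [Function.update_of_ne h, Jp] using hasDerivAt_const c (Jp (u j))

lemma pair_update (z : ℕ → ℂ) (i j : ℕ) (A : ℂ) :
    HasDerivAt (fun t : ℂ =>
      Function.update z i t j * A + (Function.update z i t j)⁻¹ * A) 0 1 := by
  rcases eq_or_ne j i with rfl | h
  · have h1 : HasDerivAt (fun t : ℂ => t * A + t⁻¹ * A)
        (1 * A + -((1 : ℂ) ^ 2)⁻¹ * A) 1 :=
      ((hasDerivAt_id 1).mul_const A).add ((hasDerivAt_inv one_ne_zero).mul_const A)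
    have h2 : (1 : ℂ) * A + -((1 : ℂ) ^ 2)⁻¹ * A = 0 := by norm_num
    rw [h2] at h1
    simpa using h1
  · simpa [Function.update_of_ne h] using hasDerivAt_const 1 (z j * A + (z j)⁻¹ * A)

/-- Sign choices `u_i = v_i = ε_i = ±1`, `z_i = 1` give critical points of the
necklace graph potential with value `8(g-1) - 16k`, where `k` is the number of
negative signs. -/
theorem necklace_sign_critical_points (g k : ℕ) (hg : 2 ≤ g) (ε : ℕ → ℂ)
    (hε : ∀ i ∈ Finset.Icc 1 (g-1), ε i = 1 ∨ ε i = -1)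
    (hk : ((Finset.Icc 1 (g-1)).filter (fun i => ε i = -1)).card = k) :
    IsCritNecklace g ε ε (fun _ => 1) ∧
    necklace g ε ε (fun _ => 1) = 8*((g : ℂ) - 1) - 16*(k : ℂ) := by
  constructor
  · -- criticality
    intro i hi
    have hc : ε i * ε i = 1 := by rcases hε i hi with h | h <;> simp [h]
    refine ⟨?_, ?_, ?_⟩
    · have hJ : ∀ j, HasDerivAt (fun t : ℂ => Jp (Function.update ε i t j)) 0 (ε i) :=
        fun j => Jp_update ε i j _ hc
      have hF : HasDerivAt (fun t => necklace g (Function.update ε i t) ε (fun _ => 1))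
          ((1:ℂ) * (0 + 0) + (1:ℂ)⁻¹ * (0 + 0) + ∑ j ∈ Icc 2 (g-1),
            ((1:ℂ) * (0 + 0) + (1:ℂ)⁻¹ * 0)) (ε i) := by
        unfold necklace
        exact ((((hasDerivAt_const _ _).add (hJ 1)).const_mul 1).add
          (((hJ (g-1)).add (hasDerivAt_const _ _)).const_mul 1⁻¹)).add
          (HasDerivAt.fun_sum fun j _ => (((hJ (j-1)).add (hJ j)).const_mul 1).add
            ((hasDerivAt_const _ _).const_mul 1⁻¹))
      simpa using hF.deriv
    · have hJ : ∀ j, HasDerivAt (fun t : ℂ => Jp (Function.update ε i t j)) 0 (ε i) :=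
        fun j => Jp_update ε i j _ hc
      have hF : HasDerivAt (fun t => necklace g ε (Function.update ε i t) (fun _ => 1))
          ((1:ℂ) * (0 + 0) + (1:ℂ)⁻¹ * (0 + 0) + ∑ j ∈ Icc 2 (g-1),
            ((1:ℂ) * 0 + (1:ℂ)⁻¹ * (0 + 0))) (ε i) := by
        unfold necklace
        exact ((((hJ (g-1)).add (hasDerivAt_const _ _)).const_mul 1).add
          (((hasDerivAt_const _ _).add (hJ 1)).const_mul 1⁻¹)).add
          (HasDerivAt.fun_sum fun j _ => ((hasDerivAt_const _ _).const_mul 1).add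
            (((hJ (j-1)).add (hJ j)).const_mul 1⁻¹))
      simpa using hF.deriv
    · have hF : HasDerivAt (fun t => necklace g ε ε (Function.update (fun _ => 1) i t))
          ((0 : ℂ) + ∑ _j ∈ Icc 2 (g-1), (0 : ℂ)) 1 := by
        unfold necklace
        exact (pair_update _ i 1 _).add (HasDerivAt.fun_sum fun j _ => pair_update _ i j _)
      simpa using hF.deriv
  · -- value
    have h1g : 1 ≤ g - 1 := by omega
    -- reindexing lemma
    have hre : ∀ f : ℕ → ℂ, ∑ j ∈ Icc 2 (g-1), f (j-1) = ∑ j ∈ Icc 1 (g-2), f j := by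
      intro f
      apply Finset.sum_nbij' (fun j => j - 1) (fun j => j + 1) <;>
        intros <;> simp_all [Finset.mem_Icc] <;> omega
    have hins : Icc 1 (g-1) = insert 1 (Icc 2 (g-1)) := by
      ext j; simp [Finset.mem_Icc, Finset.mem_insert]; omega
    have hnotmem : (1 : ℕ) ∉ Icc 2 (g-1) := by simp
    have htop : ∀ f : ℕ → ℂ, ∑ j ∈ Icc 1 (g-1), f j = (∑ j ∈ Icc 1 (g-2), f j) + f (g-1) := by
      intro f
      have : g - 1 = (g - 2) + 1 := by omega
      rw [this, Finset.sum_Icc_succ_top (by omega)]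
    have hdouble : ∀ f : ℕ → ℂ,
        (f (g-1) + f 1) + ∑ j ∈ Icc 2 (g-1), (f (j-1) + f j)
          = 2 * ∑ j ∈ Icc 1 (g-1), f j := by
      intro f
      rw [Finset.sum_add_distrib, hre]
      have h3 : ∑ j ∈ Icc 1 (g-1), f j = f 1 + ∑ j ∈ Icc 2 (g-1), f j := by
        rw [hins, Finset.sum_insert hnotmem]
      have h4 := htop f
      linear_combination -h3 - h4
    have hJ2 : ∀ j ∈ Icc 1 (g-1), Jp (ε j) = 2 * ε j := by
      intro j hj
      rcases hε j hj with h | h <;> simp [Jp, h] <;> norm_num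
    have hsum2 : ∑ j ∈ Icc 1 (g-1), Jp (ε j) = 2 * ∑ j ∈ Icc 1 (g-1), ε j := by
      rw [Finset.mul_sum]; exact Finset.sum_congr rfl hJ2
    -- the sum of signs
    have hkle : k ≤ g - 1 := by
      rw [← hk]
      calc ((Icc 1 (g-1)).filter (fun i => ε i = -1)).card ≤ (Icc 1 (g-1)).card :=
            Finset.card_filter_le _ _
        _ = g - 1 := by rw [Nat.card_Icc]; omega
    have hS : ∑ j ∈ Icc 1 (g-1), ε j = ((g : ℂ) - 1) - 2 * k := by
      rw [← Finset.sum_filter_add_sum_filter_not (Icc 1 (g-1)) (fun i => ε i = -1)]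
      have e1 : ∑ j ∈ (Icc 1 (g-1)).filter (fun i => ε i = -1), ε j = -(k : ℂ) := by
        rw [Finset.sum_congr rfl (fun j hj => (Finset.mem_filter.mp hj).2),
          Finset.sum_const, hk]
        simp
      have e2 : ∑ j ∈ (Icc 1 (g-1)).filter (fun i => ¬ ε i = -1), ε j
          = ((g : ℂ) - 1) - k := by
        have : ∀ j ∈ (Icc 1 (g-1)).filter (fun i => ¬ ε i = -1), ε j = 1 := by
          intro j hj
          rcases Finset.mem_filter.mp hj with ⟨hj1, hj2⟩
          rcases hε j hj1 with h | h
          · exact h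
          · exact absurd h hj2
        rw [Finset.sum_congr rfl this, Finset.sum_const]
        have hcard : ((Icc 1 (g-1)).filter (fun i => ¬ ε i = -1)).card = (g - 1) - k := by
          have := Finset.card_filter_add_card_filter_not
            (s := Icc 1 (g-1)) (p := fun i => ε i = -1)
          rw [hk, Nat.card_Icc] at this
          omega
        rw [hcard, nsmul_eq_mul, mul_one, Nat.cast_sub hkle, Nat.cast_sub (by omega : 1 ≤ g)]
        push_cast
        ring
      rw [e1, e2]; ring
    unfold necklace
    simp only [one_mul, inv_one]
    rw [show ∀ a b S : ℂ, a + b + S = a + b + S from fun _ _ _ => rfl]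
    have := hdouble (fun j => Jp (ε j))
    calc Jp (ε (g-1)) + Jp (ε 1) + (Jp (ε (g-1)) + Jp (ε 1)) +
          ∑ j ∈ Icc 2 (g-1), (Jp (ε (j-1)) + Jp (ε j) + (Jp (ε (j-1)) + Jp (ε j)))
        = 2 * ((Jp (ε (g-1)) + Jp (ε 1)) + ∑ j ∈ Icc 2 (g-1), (Jp (ε (j-1)) + Jp (ε j))) := by
          rw [Finset.sum_add_distrib]; ring
      _ = 2 * (2 * ∑ j ∈ Icc 1 (g-1), Jp (ε j)) := by rw [hdouble (fun j => Jp (ε j))]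
      _ = 8*((g : ℂ) - 1) - 16*(k : ℂ) := by rw [hsum2, hS]; ring
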